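/- Let 𝒜 and ℬ be two finite σ-structures. The following are equivalent: (i) every {∃,∀,∧,∨,¬}-FO sentence true in 𝒜 is true in ℬ; (ii) there exists a full surjective hyper-morphism from 𝒜 to ℬ; (iii) 𝒜 and ℬ satisfy exactly the same {∃,∀,∧,∨,¬}-FO sentences. -/

import Mathlib

namespace MC

/-- Which logical symbols (beyond ∃, ∧ and relational atoms) are allowed. -/
structure Frag where
  eq : Bool
  ne : Bool
  neg : Bool
  orF : Bool
  allF : Bool

/-- Formulas over a relational signature `σ` (with arities `ar`) in the syntactic
fragment `F`, with `n` free variables (de Bruijn style, quantifiers bind the last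
variable). Atomic relational formulas, conjunction and existential quantification
are always allowed; the other symbols only if enabled in `F`. -/
inductive Fml (σ : Type) (ar : σ → ℕ) (F : Frag) : ℕ → Type
  | rel {n : ℕ} (r : σ) (v : Fin (ar r) → Fin n) : Fml σ ar F n
  | equal {n : ℕ} (h : F.eq = true) (i j : Fin n) : Fml σ ar F n
  | nequal {n : ℕ} (h : F.ne = true) (i j : Fin n) : Fml σ ar F n
  | fnot {n : ℕ} (h : F.neg = true) (φ : Fml σ ar F n) : Fml σ ar F n
  | fand {n : ℕ} (φ ψ : Fml σ ar F n) : Fml σ ar F n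
  | forr {n : ℕ} (h : F.orF = true) (φ ψ : Fml σ ar F n) : Fml σ ar F n
  | fex {n : ℕ} (φ : Fml σ ar F (n + 1)) : Fml σ ar F n
  | fall {n : ℕ} (h : F.allF = true) (φ : Fml σ ar F (n + 1)) : Fml σ ar F n

/-- Satisfaction of a formula in a structure with domain `A` and
interpretation `I`, under a valuation of the free variables. -/
def Sat {σ : Type} {ar : σ → ℕ} {F : Frag} {A : Type}
    (I : ∀ r : σ, (Fin (ar r) → A) → Prop) :
    ∀ {n : ℕ}, Fml σ ar F n → (Fin n → A) → Prop
  | _, .rel r v, val => I r fun i => val (v i)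
  | _, .equal _ i j, val => val i = val j
  | _, .nequal _ i j, val => val i ≠ val j
  | _, .fnot _ φ, val => ¬ Sat I φ val
  | _, .fand φ ψ, val => Sat I φ val ∧ Sat I ψ val
  | _, .forr _ φ ψ, val => Sat I φ val ∨ Sat I ψ val
  | _, .fex φ, val => ∃ a : A, Sat I φ (Fin.snoc val a)
  | _, .fall _ φ, val => ∀ a : A, Sat I φ (Fin.snoc val a)

end MC

namespace MC

/-- `f : A → Set B` is a hyper-morphism from `(A, IA)` to `(B, IB)`:
it is total (nonempty images) and preserves all relations. -/
def IsHyperMorphism {σ : Type} {ar : σ → ℕ} {A B : Type}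
    (IA : ∀ r : σ, (Fin (ar r) → A) → Prop)
    (IB : ∀ r : σ, (Fin (ar r) → B) → Prop) (f : A → Set B) : Prop :=
  (∀ a : A, (f a).Nonempty) ∧
  ∀ (r : σ) (t : Fin (ar r) → A), IA r t →
    ∀ s : Fin (ar r) → B, (∀ i, s i ∈ f (t i)) → IB r s

/-- A hyper-operation `f : A → Set B` is surjective if every element of `B`
lies in the image of some element of `A`. -/
def HyperSurjective {A B : Type} (f : A → Set B) : Prop :=
  ∀ b : B, ∃ a : A, b ∈ f a

/-- A hyper-morphism is full if membership of images exactly reflects the relations. -/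
def IsFull {σ : Type} {ar : σ → ℕ} {A B : Type}
    (IA : ∀ r : σ, (Fin (ar r) → A) → Prop)
    (IB : ∀ r : σ, (Fin (ar r) → B) → Prop) (f : A → Set B) : Prop :=
  ∀ (r : σ) (t : Fin (ar r) → A) (s : Fin (ar r) → B),
    (∀ i, s i ∈ f (t i)) → (IA r t ↔ IB r s)

end MC

namespace MC

/-- The fragment {∃,∀,∧,∨,¬}-FO: equality-free first-order logic. -/
def eqFreeFrag : Frag := ⟨false, false, true, true, true⟩

section ProofAux

open Classical

variable {σ : Type} {ar : σ → ℕ}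

/-- Big conjunction of a base formula and a list of formulas. -/
def bigAnd {F : Frag} {n : ℕ} (φ : Fml σ ar F n) : List (Fml σ ar F n) → Fml σ ar F n
  | [] => φ
  | ψ :: l => .fand ψ (bigAnd φ l)

/-- Big disjunction of a base formula and a list of formulas. -/
def bigOr {F : Frag} (h : F.orF = true) {n : ℕ} (φ : Fml σ ar F n) :
    List (Fml σ ar F n) → Fml σ ar F n
  | [] => φ
  | ψ :: l => .forr h ψ (bigOr h φ l)

lemma sat_bigAnd {F : Frag} {C : Type} (I : ∀ r : σ, (Fin (ar r) → C) → Prop)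
    {n : ℕ} (φ : Fml σ ar F n) (l : List (Fml σ ar F n)) (val : Fin n → C) :
    Sat I (bigAnd φ l) val ↔ Sat I φ val ∧ ∀ ψ ∈ l, Sat I ψ val := by
  induction l with
  | nil => simp [bigAnd]
  | cons ψ l ih =>
    simp only [bigAnd, Sat, ih, List.mem_cons]
    constructor
    · rintro ⟨h1, h2, h3⟩
      exact ⟨h2, by rintro χ (rfl | hχ); exacts [h1, h3 χ hχ]⟩
    · rintro ⟨h1, h2⟩
      exact ⟨h2 ψ (Or.inl rfl), h1, fun χ hχ => h2 χ (Or.inr hχ)⟩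

lemma sat_bigOr {F : Frag} (h : F.orF = true) {C : Type}
    (I : ∀ r : σ, (Fin (ar r) → C) → Prop)
    {n : ℕ} (φ : Fml σ ar F n) (l : List (Fml σ ar F n)) (val : Fin n → C) :
    Sat I (bigOr h φ l) val ↔ Sat I φ val ∨ ∃ ψ ∈ l, Sat I ψ val := by
  induction l with
  | nil => simp [bigOr]
  | cons ψ l ih =>
    simp only [bigOr, Sat, ih, List.mem_cons]
    constructor
    · rintro (h1 | h1 | ⟨χ, hχ, hs⟩)
      · exact Or.inr ⟨ψ, Or.inl rfl, h1⟩
      · exact Or.inl h1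
      · exact Or.inr ⟨χ, Or.inr hχ, hs⟩
    · rintro (h1 | ⟨χ, (rfl | hχ), hs⟩)
      · exact Or.inr (Or.inl h1)
      · exact Or.inl hs
      · exact Or.inr (Or.inr ⟨χ, hχ, hs⟩)

variable {A B : Type}
variable (IA : ∀ r : σ, (Fin (ar r) → A) → Prop) (IB : ∀ r : σ, (Fin (ar r) → B) → Prop)

/-- The back-and-forth relation on tuples: every equality-free formula true of
`va` in `𝒜` is true of `vb` in `ℬ`. -/
def Hrel {n : ℕ} (va : Fin n → A) (vb : Fin n → B) : Prop :=
  ∀ φ : Fml σ ar eqFreeFrag n, Sat IA φ va → Sat IB φ vb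

variable {IA IB}

lemma Hrel.iff {n : ℕ} {va : Fin n → A} {vb : Fin n → B}
    (h : Hrel IA IB va vb) (φ : Fml σ ar eqFreeFrag n) :
    Sat IA φ va ↔ Sat IB φ vb := by
  refine ⟨h φ, fun hb => ?_⟩
  by_contra hna
  exact h (.fnot rfl φ) hna hb

lemma Hrel.atom {n : ℕ} {va : Fin n → A} {vb : Fin n → B}
    (h : Hrel IA IB va vb) (r : σ) (v : Fin (ar r) → Fin n) :
    IA r (fun i => va (v i)) ↔ IB r (fun i => vb (v i)) :=
  h.iff (.rel r v)

lemma Hrel.forth [Finite B] [Nonempty B] {n : ℕ} {va : Fin n → A} {vb : Fin n → B}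
    (h : Hrel IA IB va vb) (a : A) :
    ∃ b : B, Hrel IA IB (Fin.snoc va a) (Fin.snoc vb b) := by
  by_contra hc
  push_neg at hc
  have hφ : ∀ b : B, ∃ φ : Fml σ ar eqFreeFrag (n + 1),
      Sat IA φ (Fin.snoc va a) ∧ ¬ Sat IB φ (Fin.snoc vb b) := by
    intro b
    have hb := hc b
    unfold Hrel at hb
    push_neg at hb
    exact hb
  choose φ hφ1 hφ2 using hφ
  have : Fintype B := Fintype.ofFinite B
  set b0 : B := Classical.arbitrary B with hb0
  set l : List B := (Finset.univ : Finset B).toList with hl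
  set ψ : Fml σ ar eqFreeFrag n := .fex (bigAnd (φ b0) (l.map φ)) with hψ
  have hsA : Sat IA ψ va := by
    refine ⟨a, (sat_bigAnd IA _ _ _).mpr ⟨hφ1 b0, ?_⟩⟩
    intro χ hχ
    obtain ⟨b, _, rfl⟩ := List.mem_map.mp hχ
    exact hφ1 b
  obtain ⟨b', hb'⟩ := h ψ hsA
  rw [sat_bigAnd] at hb'
  refine hφ2 b' (hb'.2 (φ b') ?_)
  exact List.mem_map_of_mem (f := φ) (by simp [hl])

lemma Hrel.back [Finite A] [Nonempty A] {n : ℕ} {va : Fin n → A} {vb : Fin n → B}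
    (h : Hrel IA IB va vb) (b : B) :
    ∃ a : A, Hrel IA IB (Fin.snoc va a) (Fin.snoc vb b) := by
  by_contra hc
  push_neg at hc
  have hφ : ∀ a : A, ∃ φ : Fml σ ar eqFreeFrag (n + 1),
      Sat IA φ (Fin.snoc va a) ∧ ¬ Sat IB φ (Fin.snoc vb b) := by
    intro a
    have ha := hc a
    unfold Hrel at ha
    push_neg at ha
    exact ha
  choose φ hφ1 hφ2 using hφ
  have : Fintype A := Fintype.ofFinite A
  set a0 : A := Classical.arbitrary A with ha0
  set l : List A := (Finset.univ : Finset A).toList with hl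
  set ψ : Fml σ ar eqFreeFrag n := .fall rfl (bigOr rfl (φ a0) (l.map φ)) with hψ
  have hsA : Sat IA ψ va := by
    intro a
    refine (sat_bigOr rfl IA _ _ _).mpr (Or.inr ⟨φ a, ?_, hφ1 a⟩)
    exact List.mem_map_of_mem (f := φ) (by simp [hl])
  have hsB := h ψ hsA b
  replace hsB := (sat_bigOr _ IB _ _ _).mp hsB
  rcases hsB with h0 | ⟨χ, hχ, hs⟩
  · exact hφ2 a0 h0
  · obtain ⟨a, _, rfl⟩ := List.mem_map.mp hχ
    exact hφ2 a hs

lemma exists_vb [Finite B] [Nonempty B]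
    (h0 : Hrel IA IB (Fin.elim0 : Fin 0 → A) Fin.elim0) :
    ∀ (m : ℕ) (e : Fin m → A), ∃ vb : Fin m → B, Hrel IA IB e vb := by
  intro m
  induction m with
  | zero =>
    intro e
    have he : e = Fin.elim0 := funext fun i => i.elim0
    exact ⟨Fin.elim0, by rw [he]; exact h0⟩
  | succ m ih =>
    intro e
    obtain ⟨vb, hvb⟩ := ih (Fin.init e)
    obtain ⟨b, hb⟩ := hvb.forth (e (Fin.last m))
    rw [Fin.snoc_init_self] at hb
    exact ⟨Fin.snoc vb b, hb⟩

lemma extend_list [Finite A] [Nonempty A] :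
    ∀ (l : List B) {n : ℕ} (va : Fin n → A) (vb : Fin n → B), Hrel IA IB va vb →
      ∃ (k : ℕ) (ua : Fin k → A) (ub : Fin k → B), Hrel IA IB ua ub ∧
        (∀ j : Fin n, ∃ i, ua i = va j ∧ ub i = vb j) ∧
        (∀ b ∈ l, ∃ i, ub i = b) := by
  intro l
  induction l with
  | nil =>
    intro n va vb h
    exact ⟨n, va, vb, h, fun j => ⟨j, rfl, rfl⟩, by simp⟩
  | cons b l ih =>
    intro n va vb h
    obtain ⟨a, ha⟩ := h.back b
    obtain ⟨k, ua, ub, h1, h2, h3⟩ := ih (Fin.snoc va a) (Fin.snoc vb b) ha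
    refine ⟨k, ua, ub, h1, fun j => ?_, fun b' hb' => ?_⟩
    · obtain ⟨i, hi1, hi2⟩ := h2 j.castSucc
      exact ⟨i, by simpa using hi1, by simpa using hi2⟩
    · rcases List.mem_cons.mp hb' with rfl | hb'
      · obtain ⟨i, _, hi2⟩ := h2 (Fin.last n)
        exact ⟨i, by simpa using hi2⟩
      · exact h3 b' hb'

lemma compat_snoc {f : A → Set B} {n : ℕ} {va : Fin n → A} {vb : Fin n → B}
    (hc : ∀ i, vb i ∈ f (va i)) {a : A} {b : B} (hab : b ∈ f a) :
    ∀ i : Fin (n + 1), (Fin.snoc vb b : Fin (n + 1) → B) i ∈ f ((Fin.snoc va a : Fin (n + 1) → A) i) := by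
  intro i
  refine Fin.lastCases ?_ ?_ i
  · simpa using hab
  · intro j; simpa using hc j

lemma key2_aux {f : A → Set B} (hm : IsHyperMorphism IA IB f)
    (hs : HyperSurjective f) (hf : IsFull IA IB f) :
    ∀ {n : ℕ} (φ : Fml σ ar eqFreeFrag n) (va : Fin n → A) (vb : Fin n → B),
      (∀ i, vb i ∈ f (va i)) → (Sat IA φ va ↔ Sat IB φ vb) := by
  intro n φ
  induction φ with
  | rel r v =>
    intro va vb hc
    exact hf r _ _ (fun i => hc (v i))
  | equal h i j => simp [eqFreeFrag] at h
  | nequal h i j => simp [eqFreeFrag] at h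
  | fnot h φ ih =>
    intro va vb hc
    simp only [Sat]
    rw [ih va vb hc]
  | fand φ ψ ih1 ih2 =>
    intro va vb hc
    simp only [Sat]
    rw [ih1 va vb hc, ih2 va vb hc]
  | forr h φ ψ ih1 ih2 =>
    intro va vb hc
    simp only [Sat]
    rw [ih1 va vb hc, ih2 va vb hc]
  | fex φ ih =>
    intro va vb hc
    simp only [Sat]
    constructor
    · rintro ⟨a, ha⟩
      obtain ⟨b, hb⟩ := hm.1 a
      exact ⟨b, (ih _ _ (compat_snoc hc hb)).mp ha⟩
    · rintro ⟨b, hb⟩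
      obtain ⟨a, ha⟩ := hs b
      exact ⟨a, (ih _ _ (compat_snoc hc ha)).mpr hb⟩
  | fall h φ ih =>
    intro va vb hc
    simp only [Sat]
    constructor
    · intro hA b
      obtain ⟨a, ha⟩ := hs b
      exact (ih _ _ (compat_snoc hc ha)).mp (hA a)
    · intro hB a
      obtain ⟨b, hb⟩ := hm.1 a
      exact (ih _ _ (compat_snoc hc hb)).mpr (hB b)

lemma key1 [Finite A] [Finite B] [Nonempty A] [Nonempty B]
    (hc : ∀ φ : Fml σ ar eqFreeFrag 0, Sat IA φ Fin.elim0 → Sat IB φ Fin.elim0) :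
    ∃ f : A → Set B, IsHyperMorphism IA IB f ∧ HyperSurjective f ∧ IsFull IA IB f := by
  have h0 : Hrel IA IB (Fin.elim0 : Fin 0 → A) Fin.elim0 := hc
  have : Fintype A := Fintype.ofFinite A
  have : Fintype B := Fintype.ofFinite B
  set e : Fin (Fintype.card A) → A := fun i => (Fintype.equivFin A).symm i with he'
  have he : Function.Surjective e := fun a => ⟨Fintype.equivFin A a, by simp [he']⟩
  obtain ⟨vb, hvb⟩ := exists_vb h0 (Fintype.card A) e
  obtain ⟨k, ua, ub, h1, h2, h3⟩ := extend_list ((Finset.univ : Finset B).toList) e vb hvb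
  set f : A → Set B := fun a => {b | ∃ i, ua i = a ∧ ub i = b} with hf'
  have hfull : IsFull IA IB f := by
    intro r t s hms
    choose p hp1 hp2 using hms
    have hat := h1.atom r p
    have et : (fun i => ua (p i)) = t := funext hp1
    have es : (fun i => ub (p i)) = s := funext hp2
    rwa [et, es] at hat
  have hcov : ∀ a : A, ∃ i, ua i = a := by
    intro a
    obtain ⟨j, rfl⟩ := he a
    obtain ⟨i, hi1, _⟩ := h2 j
    exact ⟨i, hi1⟩
  refine ⟨f, ⟨?_, ?_⟩, ?_, hfull⟩
  · intro a
    obtain ⟨i, hi⟩ := hcov a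
    exact ⟨ub i, i, hi, rfl⟩
  · intro r t ht s hms
    exact (hfull r t s hms).mp ht
  · intro b
    obtain ⟨i, hi⟩ := h3 b (by simp)
    exact ⟨ua i, i, rfl, hi⟩

end ProofAux

/-- For equality-free FO: containment is characterised by the existence of a
full surjective hyper-morphism, and coincides with equivalence. -/
theorem eqFree_containment_iff_full_surjective_hyper {σ : Type} [Finite σ] (ar : σ → ℕ)
    {A B : Type} [Finite A] [Finite B] [Nonempty A] [Nonempty B]
    (IA : ∀ r : σ, (Fin (ar r) → A) → Prop)
    (IB : ∀ r : σ, (Fin (ar r) → B) → Prop) :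
    ((∀ φ : Fml σ ar eqFreeFrag 0, Sat IA φ Fin.elim0 → Sat IB φ Fin.elim0) ↔
      ∃ f : A → Set B, IsHyperMorphism IA IB f ∧ HyperSurjective f ∧ IsFull IA IB f) ∧
    ((∀ φ : Fml σ ar eqFreeFrag 0, Sat IA φ Fin.elim0 → Sat IB φ Fin.elim0) ↔
      ∀ φ : Fml σ ar eqFreeFrag 0, Sat IA φ Fin.elim0 ↔ Sat IB φ Fin.elim0) := by
  have hcompat0 : ∀ (f : A → Set B) (i : Fin 0),
      (Fin.elim0 : Fin 0 → B) i ∈ f ((Fin.elim0 : Fin 0 → A) i) := fun _ i => i.elim0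
  constructor
  · constructor
    · exact key1
    · rintro ⟨f, hm, hs, hf⟩ φ h
      exact (key2_aux hm hs hf φ _ _ (hcompat0 f)).mp h
  · constructor
    · intro hc φ
      obtain ⟨f, hm, hs, hf⟩ := key1 hc
      exact key2_aux hm hs hf φ _ _ (hcompat0 f)
    · intro he φ h
      exact (he φ).mp h

end MC
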